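/- arXiv:2112.10077 — 2 statements merged into one kernel-verified Lean document; each statement's English description precedes it below -/
import Mathlib

section
/- Let (τ_n)_{n≥1} be complex numbers with ∑_{n=1}^∞ |τ_n| < ∞, and let (γ_n)_{n≥1} be real numbers with 0 ≤ γ_1 < γ_2 < ⋯ and γ_n → ∞. If ∑_{n=1}^∞ τ_n e^{−γ_n t} = 0 for every real t in some nonempty open interval (a,b) with 0 < a < b, then τ_n = 0 for every n. -/
open Filter Topology

/-- If an absolutely convergent generalized Dirichlet series `∑ τ n e^{-γ n t}` with
strictly increasing nonnegative exponents tending to `∞` vanishes for all real `t` in a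
nonempty open interval `(a, b)` with `0 < a < b`, then all coefficients vanish. -/
theorem dirichlet_series_vanishing_on_interval_implies_trivial
    (τ : ℕ → ℂ) (hτ : Summable fun n => ‖τ n‖)
    (γ : ℕ → ℝ) (hγ0 : 0 ≤ γ 0) (hγ_mono : StrictMono γ)
    (hγ_tendsto : Tendsto γ atTop atTop)
    (a b : ℝ) (ha : 0 < a) (hab : a < b)
    (hvanish : ∀ x ∈ Set.Ioo a b,
      ∑' n, τ n * Complex.exp (-(γ n : ℂ) * (x : ℂ)) = 0) :
    ∀ n, τ n = 0 := by
  have hγnn : ∀ n, 0 ≤ γ n := fun n => hγ0.trans (hγ_mono.monotone (Nat.zero_le n))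
  set F : ℂ → ℂ := fun z => ∑' n, τ n * Complex.exp (-(γ n : ℂ) * z) with hF
  set S : Set ℂ := {z | 0 < z.re} with hS
  have hSopen : IsOpen S := isOpen_lt continuous_const Complex.continuous_re
  -- the series term bound on S
  have hbound : ∀ n (z : ℂ), z ∈ S → ‖τ n * Complex.exp (-(γ n : ℂ) * z)‖ ≤ ‖τ n‖ := by
    intro n z hz
    rw [norm_mul]
    have : ‖Complex.exp (-(γ n : ℂ) * z)‖ = Real.exp (-(γ n) * z.re) := by
      rw [Complex.norm_exp]
      congr 1
      simp [Complex.mul_re]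
    rw [this]
    have h1 : Real.exp (-(γ n) * z.re) ≤ 1 := by
      rw [Real.exp_le_one_iff]
      exact mul_nonpos_of_nonpos_of_nonneg (neg_nonpos.2 (hγnn n)) (le_of_lt hz)
    calc ‖τ n‖ * Real.exp (-(γ n) * z.re) ≤ ‖τ n‖ * 1 := by
          exact mul_le_mul_of_nonneg_left h1 (norm_nonneg _)
      _ = ‖τ n‖ := mul_one _
  -- F is differentiable on S
  have hdiff : DifferentiableOn ℂ F S := by
    refine TendstoLocallyUniformlyOn.differentiableOn
      ((tendstoUniformlyOn_tsum hτ hbound).tendstoLocallyUniformlyOn) ?_ hSopen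
    filter_upwards with t
    exact DifferentiableOn.fun_sum fun n _ =>
      ((differentiable_const (τ n)).mul ((differentiable_id.const_mul _).cexp)).differentiableOn
  have hanal : AnalyticOnNhd ℂ F S := hdiff.analyticOnNhd hSopen
  -- F vanishes on S by analytic continuation
  set c : ℝ := (a + b) / 2 with hcdef
  have hcab : c ∈ Set.Ioo a b := by
    constructor <;> (simp only [hcdef]; linarith)
  have hc : ((c : ℝ) : ℂ) ∈ S := by
    simp only [hS, Set.mem_setOf_eq, Complex.ofReal_re]
    simp only [hcdef]; linarith
  have hfreq : ∃ᶠ z in 𝓝[≠] ((c : ℝ) : ℂ), F z = 0 := by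
    set u : ℕ → ℝ := fun j => c + (b - c) / (j + 2) with hu
    have hbc : 0 < b - c := by simp only [hcdef]; linarith
    have hmemu : ∀ j, u j ∈ Set.Ioo a b := by
      intro j
      have hj2 : (0:ℝ) < (j:ℝ) + 2 := by positivity
      have hpos : 0 < (b - c) / ((j:ℝ) + 2) := by positivity
      have h1 : (b - c) / ((j:ℝ) + 2) < b - c := by
        rw [div_lt_iff₀ hj2]; nlinarith
      constructor
      · simp only [hu]; linarith [hcab.1]
      · simp only [hu]; linarith
    have htend : Tendsto (fun j : ℕ => ((u j : ℝ) : ℂ)) atTop (𝓝[≠] (c : ℂ)) := by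
      rw [tendsto_nhdsWithin_iff]
      constructor
      · have h2 : Tendsto u atTop (𝓝 c) := by
          have h3 : Tendsto (fun j : ℕ => (b - c) / ((j:ℝ) + 2)) atTop (𝓝 0) := by
            apply Tendsto.div_atTop tendsto_const_nhds
            exact tendsto_atTop_add_const_right _ 2 tendsto_natCast_atTop_atTop
          simpa using tendsto_const_nhds.add h3
        exact (Complex.continuous_ofReal.tendsto c).comp h2
      · filter_upwards with j
        have hj2 : (0:ℝ) < (j:ℝ) + 2 := by positivity
        have hne : u j ≠ c := by
          have hpos : 0 < (b - c) / ((j:ℝ) + 2) := by positivity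
          simp only [hu]; intro h; nlinarith [h]
        simp only [Set.mem_compl_iff, Set.mem_singleton_iff, ne_eq]
        exact_mod_cast fun h => hne (by exact_mod_cast h)
    apply htend.frequently
    apply Filter.Frequently.of_forall
    intro j
    exact hvanish (u j) (hmemu j)
  have hzero : ∀ z ∈ S, F z = 0 :=
    hanal.eqOn_zero_of_preconnected_of_frequently_eq_zero
      (convex_halfSpace_re_gt 0).isPreconnected hc hfreq
  -- now extract coefficients by induction
  intro n
  induction n using Nat.strong_induction_on with
  | _ n ih =>
    -- consider g t = exp(γ n * t) * F t for real t → ∞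
    have key : Tendsto (fun t : ℝ => ∑' m, τ m * Complex.exp (((γ n - γ m : ℝ) : ℂ) * t))
        atTop (𝓝 (τ n)) := by
      have := tendsto_tsum_of_dominated_convergence (𝓕 := (atTop : Filter ℝ))
        (f := fun (t : ℝ) (m : ℕ) => τ m * Complex.exp (((γ n - γ m : ℝ) : ℂ) * t))
        (g := fun m => if m = n then τ n else 0) (bound := fun m => ‖τ m‖) hτ ?_ ?_
      · have hts : (∑' m, if m = n then τ n else 0) = τ n := by
          rw [tsum_eq_single n]
          · simp
          · intro m hm; simp [hm]
        rwa [hts] at this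
      · intro m
        rcases lt_trichotomy m n with hm | hm | hm
        · simp [ih m hm, (Nat.ne_of_lt hm)]
        · subst hm
          simp only [if_pos rfl, sub_self, Complex.ofReal_zero, zero_mul, Complex.exp_zero,
            mul_one]
          exact tendsto_const_nhds
        · have hneg : γ n - γ m < 0 := sub_neg.2 (hγ_mono hm)
          have h0 : Tendsto (fun t : ℝ => Complex.exp (((γ n - γ m : ℝ) : ℂ) * t)) atTop (𝓝 0) := by
            rw [tendsto_zero_iff_norm_tendsto_zero]
            have heq : ∀ t : ℝ, ‖Complex.exp (((γ n - γ m : ℝ) : ℂ) * t)‖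
                = Real.exp ((γ n - γ m) * t) := by
              intro t
              rw [Complex.norm_exp]
              congr 1
              simp [Complex.mul_re]
            simp only [heq]
            have : Tendsto (fun t : ℝ => (γ n - γ m) * t) atTop atBot :=
              tendsto_id.const_mul_atTop_of_neg hneg
            exact Real.tendsto_exp_atBot.comp this
          have := (tendsto_const_nhds (x := τ m)).mul h0
          simpa [Nat.ne_of_gt hm] using this
      · filter_upwards [eventually_ge_atTop (0:ℝ)] with t ht m
        rw [norm_mul]
        have : ‖Complex.exp (((γ n - γ m : ℝ) : ℂ) * t)‖ = Real.exp ((γ n - γ m) * t) := by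
          rw [Complex.norm_exp]
          congr 1
          simp [Complex.mul_re]
        rw [this]
        rcases lt_or_ge m n with hm | hm
        · simp [ih m hm]
        · have : γ n - γ m ≤ 0 := sub_nonpos.2 (hγ_mono.monotone hm)
          have h1 : Real.exp ((γ n - γ m) * t) ≤ 1 := by
            rw [Real.exp_le_one_iff]
            exact mul_nonpos_of_nonpos_of_nonneg this ht
          calc ‖τ m‖ * Real.exp ((γ n - γ m) * t) ≤ ‖τ m‖ * 1 :=
                mul_le_mul_of_nonneg_left h1 (norm_nonneg _)
            _ = ‖τ m‖ := mul_one _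
    -- but the function is eventually 0
    have hzero' : ∀ᶠ t : ℝ in atTop,
        (∑' m, τ m * Complex.exp (((γ n - γ m : ℝ) : ℂ) * t)) = 0 := by
      filter_upwards [eventually_gt_atTop (0:ℝ)] with t ht
      have hFt : F (t : ℂ) = 0 := hzero t (by simpa [hS] using ht)
      have hexp : ∀ m : ℕ, τ m * Complex.exp (((γ n - γ m : ℝ) : ℂ) * t)
          = Complex.exp ((γ n : ℂ) * t) * (τ m * Complex.exp (-(γ m : ℂ) * t)) := by
        intro m
        rw [mul_comm (Complex.exp _), mul_assoc, ← Complex.exp_add]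
        push_cast
        ring_nf
      calc (∑' m, τ m * Complex.exp (((γ n - γ m : ℝ) : ℂ) * t))
          = ∑' m, Complex.exp ((γ n : ℂ) * t) * (τ m * Complex.exp (-(γ m : ℂ) * t)) := by
            exact tsum_congr hexp
        _ = Complex.exp ((γ n : ℂ) * t) * F (t : ℂ) := (tsum_mul_left)
        _ = 0 := by rw [hFt, mul_zero]
    have : Tendsto (fun t : ℝ => (∑' m, τ m * Complex.exp (((γ n - γ m : ℝ) : ℂ) * t)))
        atTop (𝓝 0) := by
      exact Tendsto.congr' (by filter_upwards [hzero'] with t ht; exact ht.symm) tendsto_const_nhds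
    exact (tendsto_nhds_unique key this).symm ▸ rfl
end

section
/- Let 0 ≤ t_0 < t_1 < t_2 < ⋯ be a strictly increasing sequence of real numbers, let (b_n)_{n≥1} be positive reals, and let (a_{k,n})_{k,n≥1} and (ã_{k,n})_{k,n≥1} be complex numbers with ∑_{k=1}^∞ ∑_{n=1}^∞ |a_{k,n}| < ∞ and ∑_{k=1}^∞ ∑_{n=1}^∞ |ã_{k,n}| < ∞. For Re s > 0 set P_k(s) = ∑_{n=1}^∞ a_{k,n} · b_n/(s + b_n) and P̃_k(s) = ∑_{n=1}^∞ ã_{k,n} · b_n/(s + b_n). If ∑_{k=1}^∞ (e^{−t_{k−1}s} − e^{−t_k s}) P_k(s) = ∑_{k=1}^∞ (e^{−t_{k−1}s} − e^{−t_k s}) P̃_k(s) for every s with Re s > 0, then for every ε with 0 < ε < t_1 − t_0 one has lim_{s→∞, s real} e^{εs} (P_1(s) − P̃_1(s)) = 0. -/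
open Filter Topology


private lemma div_norm_le_one (b s : ℝ) (hb : 0 < b) (hs : 0 < s) :
    ‖(b : ℂ) / ((s : ℂ) + (b : ℂ))‖ ≤ 1 := by
  have h : (s : ℂ) + (b : ℂ) = ((s + b : ℝ) : ℂ) := by push_cast; ring
  rw [h, ← Complex.ofReal_div, Complex.norm_real, Real.norm_of_nonneg (by positivity),
    div_le_one (by positivity)]
  linarith

private lemma summable_norm_P (b : ℕ → ℝ) (hb : ∀ n, 0 < b n) (c : ℕ → ℂ)
    (hc : Summable fun n => ‖c n‖) (s : ℝ) (hs : 0 < s) :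
    Summable fun n => ‖c n * ((b n : ℂ) / ((s : ℂ) + (b n : ℂ)))‖ := by
  refine Summable.of_nonneg_of_le (fun n => norm_nonneg _) (fun n => ?_) hc
  rw [norm_mul]
  calc ‖c n‖ * ‖(b n : ℂ) / ((s:ℂ) + b n)‖ ≤ ‖c n‖ * 1 := by
        gcongr
        exact div_norm_le_one (b n) s (hb n) hs
    _ = ‖c n‖ := mul_one _

private lemma norm_P_le (b : ℕ → ℝ) (hb : ∀ n, 0 < b n) (c : ℕ → ℂ)
    (hc : Summable fun n => ‖c n‖) (s : ℝ) (hs : 0 < s) :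
    ‖∑' n, c n * ((b n : ℂ) / ((s : ℂ) + (b n : ℂ)))‖ ≤ ∑' n, ‖c n‖ := by
  have h1 := summable_norm_P b hb c hc s hs
  calc ‖∑' n, c n * ((b n : ℂ) / ((s:ℂ) + b n))‖
      ≤ ∑' n, ‖c n * ((b n : ℂ) / ((s:ℂ) + b n))‖ := norm_tsum_le_tsum_norm h1
    _ ≤ ∑' n, ‖c n‖ := by
        refine Summable.tsum_le_tsum (fun n => ?_) h1 hc
        rw [norm_mul]
        calc ‖c n‖ * ‖(b n : ℂ) / ((s:ℂ) + b n)‖ ≤ ‖c n‖ * 1 := by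
              gcongr
              exact div_norm_le_one (b n) s (hb n) hs
          _ = ‖c n‖ := mul_one _

/-- The key extraction step in the proof of Theorem 1.1(i): if the two Laplace-transformed
data series agree on the open right half-plane, then for every `0 < ε < t 1 - t 0`,
`e^{εs} (P 0 s - P̃ 0 s) → 0` as the real variable `s → ∞`, where
`P k s = ∑' n, a k n * (b n / (s + b n))` and similarly for `P̃`. -/
theorem first_time_slice_extraction
    (t : ℕ → ℝ) (ht0 : 0 ≤ t 0) (ht : StrictMono t)
    (b : ℕ → ℝ) (hb_pos : ∀ n, 0 < b n)
    (a a' : ℕ → ℕ → ℂ)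
    (ha_inner : ∀ k, Summable fun n => ‖a k n‖)
    (ha_outer : Summable fun k => ∑' n, ‖a k n‖)
    (ha'_inner : ∀ k, Summable fun n => ‖a' k n‖)
    (ha'_outer : Summable fun k => ∑' n, ‖a' k n‖)
    (heq : ∀ s : ℂ, 0 < s.re →
      ∑' k, (Complex.exp (-(t k : ℂ) * s) - Complex.exp (-(t (k + 1) : ℂ) * s)) *
          ∑' n, a k n * ((b n : ℂ) / (s + (b n : ℂ)))
        = ∑' k, (Complex.exp (-(t k : ℂ) * s) - Complex.exp (-(t (k + 1) : ℂ) * s)) *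
            ∑' n, a' k n * ((b n : ℂ) / (s + (b n : ℂ))))
    (ε : ℝ) (hε0 : 0 < ε) (hε : ε < t 1 - t 0) :
    Tendsto (fun s : ℝ =>
        Complex.exp ((ε : ℂ) * (s : ℂ)) *
          ((∑' n, a 0 n * ((b n : ℂ) / ((s : ℂ) + (b n : ℂ)))) -
            ∑' n, a' 0 n * ((b n : ℂ) / ((s : ℂ) + (b n : ℂ)))))
      atTop (𝓝 0) := by

  have ht01 : t 0 < t 1 := ht (by norm_num)
  set A : ℕ → ℝ := fun k => ∑' n, ‖a k n‖ with hAdef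
  set A' : ℕ → ℝ := fun k => ∑' n, ‖a' k n‖ with hA'def
  have hA_nonneg : ∀ k, 0 ≤ A k := fun k => tsum_nonneg fun n => norm_nonneg _
  have hA'_nonneg : ∀ k, 0 ≤ A' k := fun k => tsum_nonneg fun n => norm_nonneg _
  set C : ℝ := (∑' k, A k) + (∑' k, A' k) with hCdef
  have hC_nonneg : 0 ≤ C :=
    add_nonneg (tsum_nonneg hA_nonneg) (tsum_nonneg hA'_nonneg)
  set g : ℝ → ℝ := fun s =>
    C * Real.exp ((ε + t 0 - t 1) * s) / (1 - Real.exp ((t 0 - t 1) * s)) with hgdef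
  apply squeeze_zero_norm'
  · -- eventual bound
    filter_upwards [eventually_gt_atTop (0:ℝ)] with s hs
    -- notation
    set P : ℕ → ℂ := fun k => ∑' n, a k n * ((b n : ℂ) / ((s:ℂ) + (b n : ℂ))) with hP
    set P' : ℕ → ℂ := fun k => ∑' n, a' k n * ((b n : ℂ) / ((s:ℂ) + (b n : ℂ))) with hP'
    set E : ℕ → ℂ := fun k =>
      Complex.exp (-(t k : ℂ) * (s:ℂ)) - Complex.exp (-(t (k+1) : ℂ) * (s:ℂ)) with hEdef
    set Er : ℕ → ℝ := fun k => Real.exp (-(t k) * s) - Real.exp (-(t (k+1)) * s) with hErdef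
    have hE : ∀ k, E k = ((Er k : ℝ) : ℂ) := by
      intro k
      have c1 : ((-(t k) * s : ℝ) : ℂ) = -(t k : ℂ) * (s:ℂ) := by push_cast; ring
      have c2 : ((-(t (k+1)) * s : ℝ) : ℂ) = -(t (k+1) : ℂ) * (s:ℂ) := by push_cast; ring
      simp only [hEdef, hErdef, Complex.ofReal_sub, Complex.ofReal_exp, c1, c2]
    have hEr_nonneg : ∀ k, 0 ≤ Er k := by
      intro k
      have := (ht (Nat.lt_succ_self k)).le
      have : -(t (k+1)) * s ≤ -(t k) * s := by nlinarith
      simpa [hErdef, sub_nonneg] using Real.exp_le_exp.2 this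
    have hnormE : ∀ k, ‖E k‖ = Er k := by
      intro k
      rw [hE k, Complex.norm_real, Real.norm_of_nonneg (hEr_nonneg k)]
    have hEr_le : ∀ k, Er k ≤ Real.exp (-(t k) * s) := fun k =>
      sub_le_self _ (Real.exp_pos _).le
    have hE_le_one : ∀ k, ‖E k‖ ≤ 1 := by
      intro k
      rw [hnormE k]
      refine (hEr_le k).trans ?_
      rw [show (1:ℝ) = Real.exp 0 by simp]
      apply Real.exp_le_exp.2
      have : t 0 ≤ t k := ht.monotone (Nat.zero_le k)
      nlinarith
    have hnormP : ∀ k, ‖P k‖ ≤ A k := fun k =>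
      norm_P_le b hb_pos (a k) (ha_inner k) s hs
    have hnormP' : ∀ k, ‖P' k‖ ≤ A' k := fun k =>
      norm_P_le b hb_pos (a' k) (ha'_inner k) s hs
    have hSP : Summable fun k => E k * P k := by
      refine Summable.of_norm (Summable.of_nonneg_of_le (fun k => norm_nonneg _)
        (fun k => ?_) ha_outer)
      rw [norm_mul]
      calc ‖E k‖ * ‖P k‖ ≤ 1 * A k :=
            mul_le_mul (hE_le_one k) (hnormP k) (norm_nonneg _) zero_le_one
        _ = A k := one_mul _
    have hSP' : Summable fun k => E k * P' k := by
      refine Summable.of_norm (Summable.of_nonneg_of_le (fun k => norm_nonneg _)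
        (fun k => ?_) ha'_outer)
      rw [norm_mul]
      calc ‖E k‖ * ‖P' k‖ ≤ 1 * A' k :=
            mul_le_mul (hE_le_one k) (hnormP' k) (norm_nonneg _) zero_le_one
        _ = A' k := one_mul _
    have heqs : ∑' k, E k * P k = ∑' k, E k * P' k := heq (s:ℂ) (by simpa using hs)
    set f : ℕ → ℂ := fun k => E k * (P k - P' k) with hfdef
    have hf_sum : Summable f := by
      have := hSP.sub hSP'
      simpa [hfdef, mul_sub] using this
    have htsum0 : ∑' k, f k = 0 := by
      have := Summable.tsum_sub hSP hSP'
      simp only [hfdef, mul_sub]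
      rw [this, heqs, sub_self]
    have hsplit : f 0 = -∑' k, f (k+1) := by
      have h := Summable.tsum_eq_zero_add hf_sum
      rw [htsum0] at h
      linear_combination -h
    -- tail bound
    have hfn_le : ∀ k, ‖f (k+1)‖ ≤ Real.exp (-(t 1) * s) * (A (k+1) + A' (k+1)) := by
      intro k
      rw [hfdef]
      simp only [norm_mul]
      have h1 : ‖E (k+1)‖ ≤ Real.exp (-(t 1) * s) := by
        rw [hnormE]
        refine (hEr_le _).trans (Real.exp_le_exp.2 ?_)
        have : t 1 ≤ t (k+1) := ht.monotone (by omega)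
        nlinarith
      have h2 : ‖P (k+1) - P' (k+1)‖ ≤ A (k+1) + A' (k+1) :=
        (norm_sub_le _ _).trans (add_le_add (hnormP _) (hnormP' _))
      exact mul_le_mul h1 h2 (norm_nonneg _) (Real.exp_pos _).le
    have hhsum : Summable fun k => Real.exp (-(t 1) * s) * (A (k+1) + A' (k+1)) := by
      apply Summable.mul_left
      exact ((summable_nat_add_iff 1).2 ha_outer).add ((summable_nat_add_iff 1).2 ha'_outer)
    have hfn_normsum : Summable fun k => ‖f (k+1)‖ :=
      Summable.of_nonneg_of_le (fun k => norm_nonneg _) hfn_le hhsum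
    have htail_A : ∑' k, A (k+1) ≤ ∑' k, A k := by
      have h := Summable.tsum_eq_zero_add ha_outer
      have := hA_nonneg 0
      linarith [h]
    have htail_A' : ∑' k, A' (k+1) ≤ ∑' k, A' k := by
      have h := Summable.tsum_eq_zero_add ha'_outer
      have := hA'_nonneg 0
      linarith [h]
    have htail : ‖∑' k, f (k+1)‖ ≤ Real.exp (-(t 1) * s) * C := by
      calc ‖∑' k, f (k+1)‖ ≤ ∑' k, ‖f (k+1)‖ := norm_tsum_le_tsum_norm hfn_normsum
        _ ≤ ∑' k, Real.exp (-(t 1) * s) * (A (k+1) + A' (k+1)) :=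
            Summable.tsum_le_tsum hfn_le hfn_normsum hhsum
        _ = Real.exp (-(t 1) * s) * ∑' k, (A (k+1) + A' (k+1)) := tsum_mul_left
        _ ≤ Real.exp (-(t 1) * s) * C := by
            apply mul_le_mul_of_nonneg_left _ (Real.exp_pos _).le
            rw [Summable.tsum_add ((summable_nat_add_iff 1).2 ha_outer)
              ((summable_nat_add_iff 1).2 ha'_outer)]
            rw [hCdef]
            exact add_le_add htail_A htail_A'
    have hf0_le : ‖f 0‖ ≤ Real.exp (-(t 1) * s) * C := by
      rw [hsplit, norm_neg]; exact htail
    -- positivity of denominators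
    have hEr0_pos : 0 < Er 0 := by
      rw [hErdef]
      simp only [sub_pos]
      exact Real.exp_lt_exp.2 (by nlinarith)
    have hd_pos : 0 < 1 - Real.exp ((t 0 - t 1) * s) := by
      have : Real.exp ((t 0 - t 1) * s) < 1 := Real.exp_lt_one_iff.2 (by nlinarith)
      linarith
    have hu_pos : 0 < Real.exp (-(t 0) * s) := Real.exp_pos _
    have hx : Er 0 = Real.exp (-(t 0) * s) * (1 - Real.exp ((t 0 - t 1) * s)) := by
      rw [mul_sub, mul_one, ← Real.exp_add, show -(t 0) * s + (t 0 - t 1) * s = -(t 1) * s by ring]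
    have e3 : Real.exp (ε * s) * Real.exp (-(t 1) * s)
        = Real.exp ((ε + t 0 - t 1) * s) * Real.exp (-(t 0) * s) := by
      rw [← Real.exp_add, ← Real.exp_add]
      congr 1; ring
    -- norm of goal term
    have hnorm_eq : ‖Complex.exp ((ε:ℂ) * (s:ℂ)) * (P 0 - P' 0)‖
        = Real.exp (ε * s) * ‖P 0 - P' 0‖ := by
      rw [norm_mul]
      congr 1
      rw [Complex.norm_exp]
      congr 1
      simp
    have hkey : ‖P 0 - P' 0‖ * Er 0 ≤ Real.exp (-(t 1) * s) * C := by
      have : ‖f 0‖ = Er 0 * ‖P 0 - P' 0‖ := by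
        rw [hfdef]; simp only [norm_mul, hnormE 0]
      nlinarith [hf0_le]
    show ‖Complex.exp ((ε:ℂ) * (s:ℂ)) * (P 0 - P' 0)‖ ≤ g s
    rw [hnorm_eq, hgdef]
    rw [le_div_iff₀ hd_pos]
    rw [hx] at hkey
    nlinarith [mul_le_mul_of_nonneg_left hkey (Real.exp_pos (ε * s)).le,
      mul_nonneg (Real.exp_pos ((ε + t 0 - t 1) * s)).le hC_nonneg,
      norm_nonneg (P 0 - P' 0), Real.exp_pos (ε * s)]
  · -- g → 0
    have h1 : Tendsto (fun s : ℝ => Real.exp ((ε + t 0 - t 1) * s)) atTop (𝓝 0) :=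
      Real.tendsto_exp_atBot.comp (tendsto_id.const_mul_atTop_of_neg (by linarith))
    have h2 : Tendsto (fun s : ℝ => Real.exp ((t 0 - t 1) * s)) atTop (𝓝 0) :=
      Real.tendsto_exp_atBot.comp (tendsto_id.const_mul_atTop_of_neg (by linarith))
    have := ((tendsto_const_nhds (x := C)).mul h1).div
      ((tendsto_const_nhds (x := (1:ℝ))).sub h2) (by norm_num)
    simp only [mul_zero, sub_zero, zero_div] at this
    exact this
end
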